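/- arXiv:math/0307329 — 2 statements merged into one kernel-verified Lean document; each statement's English description precedes it below -/
import Mathlib

section
/- Let V: Ω → ℝ be C¹ on an open set Ω ⊆ ℝⁿ and let r(t), t ∈ (a,b), be a maximal solution of r'' = −∇V(r). Suppose there exist values v₀ < v₁ with dist(V⁻¹(v₀), V⁻¹(v₁)) > 0, and an infinite sequence t₁ < s₁ < t₂ < s₂ < ⋯ in (a,b) with V(r(tᵢ)) = v₀ and V(r(sᵢ)) = v₁ for all i. Then b = +∞. -/
open Real Set Filter

/-- If a solution of `r'' = -∇V(r)` crosses between two level sets of `V` that are a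
positive distance apart infinitely many times, its interval of definition cannot have a
finite right endpoint. -/
theorem no_finite_escape {n : ℕ} (Ω : Set (EuclideanSpace ℝ (Fin n))) (hΩ : IsOpen Ω)
    (V : EuclideanSpace ℝ (Fin n) → ℝ) (hV : ContDiffOn ℝ 1 V Ω)
    (a b : ℝ) (r r' : ℝ → EuclideanSpace ℝ (Fin n))
    (hmem : ∀ t ∈ Set.Ioo a b, r t ∈ Ω)
    (hr : ∀ t ∈ Set.Ioo a b, HasDerivAt r (r' t) t)
    (hr' : ∀ t ∈ Set.Ioo a b, HasDerivAt r' (-gradient V (r t)) t)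
    (v₀ v₁ : ℝ) (hv : v₀ < v₁) (δ : ℝ) (hδ : 0 < δ)
    (hsep : ∀ p ∈ Ω, ∀ q ∈ Ω, V p = v₀ → V q = v₁ → δ ≤ dist p q)
    (ts ss : ℕ → ℝ)
    (hts : ∀ i, ts i ∈ Set.Ioo a b) (hss : ∀ i, ss i ∈ Set.Ioo a b)
    (horder : ∀ i, ts i < ss i ∧ ss i < ts (i + 1))
    (ht : ∀ i, V (r (ts i)) = v₀) (hs : ∀ i, V (r (ss i)) = v₁) :
    False := by
  set E : ℝ → ℝ := fun t => V (r t) + ‖r' t‖ ^ 2 / 2 with hE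
  have hVd : ∀ t ∈ Set.Ioo a b, HasDerivAt (fun t => V (r t))
      (inner ℝ (gradient V (r t)) (r' t)) t := by
    intro t htm
    have hdiff : DifferentiableAt ℝ V (r t) :=
      (hV.contDiffAt (hΩ.mem_nhds (hmem t htm))).differentiableAt one_ne_zero
    have := hdiff.hasGradientAt.hasFDerivAt.comp_hasDerivAt t (hr t htm)
    simp at this ⊢
    exact this
  have hEd : ∀ t ∈ Set.Ioo a b, HasDerivAt E 0 t := by
    intro t htm
    have h1 := hVd t htm
    have key : (fun u => inner ℝ (r' u) (r' u) / 2) = fun u => ‖r' u‖ ^ 2 / 2 :=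
      funext fun u => by rw [real_inner_self_eq_norm_sq]
    have h4 := ((hr' t htm).inner ℝ (hr' t htm)).div_const 2
    rw [key] at h4
    have hval : (inner ℝ (r' t) (-gradient V (r t))
        + inner ℝ (-gradient V (r t)) (r' t)) / 2
        = -inner ℝ (gradient V (r t)) (r' t) := by
      simp only [inner_neg_right, real_inner_comm]; ring
    rw [hval] at h4
    have := h1.add h4
    simp at this
    exact this
  have hEconst : ∀ s ∈ Set.Ioo a b, ∀ t ∈ Set.Ioo a b, E s = E t := by
    intro s hsm t htm
    refine Convex.is_const_of_fderivWithin_eq_zero (𝕜 := ℝ) (convex_Ioo a b)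
      (fun u hu => ((hEd u hu).differentiableAt).differentiableWithinAt)
      (fun u hu => ?_) hsm htm
    rw [fderivWithin_eq_fderiv (isOpen_Ioo.uniqueDiffOn u hu) (hEd u hu).differentiableAt,
      (hEd u hu).hasFDerivAt.fderiv]
    ext
    simp
  -- the constant energy value
  obtain ⟨e, hEe⟩ : ∃ e : ℝ, ∀ t ∈ Set.Ioo a b, E t = e :=
    ⟨E (ts 0), fun t htm => hEconst t htm (ts 0) (hts 0)⟩
  -- e - v₀ ≥ 0
  have hev : v₀ ≤ e := by
    have h0 : V (r (ts 0)) + ‖r' (ts 0)‖ ^ 2 / 2 = e := hEe (ts 0) (hts 0)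
    rw [ht 0] at h0
    nlinarith [sq_nonneg ‖r' (ts 0)‖]
  obtain ⟨M, hM⟩ : ∃ M : ℝ, M = Real.sqrt (2 * (e - v₀)) := ⟨_, rfl⟩
  have hMnonneg : 0 ≤ M := hM ▸ Real.sqrt_nonneg _
  -- main per-crossing estimate: ss i - ts i ≥ δ / something; we show M * (ss i - ts i) ≥ δ
  have hkey : ∀ i, δ ≤ M * (ss i - ts i) := by
    intro i
    obtain ⟨hio, hio2⟩ := horder i
    have hIcc : Set.Icc (ts i) (ss i) ⊆ Set.Ioo a b := by
      intro u hu
      exact ⟨lt_of_lt_of_le (hts i).1 hu.1, lt_of_le_of_lt hu.2 (hss i).2⟩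
    have hcont : ContinuousOn (fun u => V (r u)) (Set.Icc (ts i) (ss i)) := by
      intro u hu
      exact ((hVd u (hIcc hu)).continuousAt).continuousWithinAt
    -- t' = last time V∘r = v₀ in [ts i, ss i]
    set A : Set ℝ := {u ∈ Set.Icc (ts i) (ss i) | V (r u) = v₀} with hA
    have hAne : A.Nonempty := ⟨ts i, ⟨⟨le_refl _, le_of_lt hio⟩, ht i⟩⟩
    have hAbdd : BddAbove A := ⟨ss i, fun u hu => hu.1.2⟩
    have hAclosed : IsClosed A := by
      have : A = Set.Icc (ts i) (ss i) ∩ (fun u => V (r u)) ⁻¹' {v₀} := by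
        ext u; simp [hA, Set.mem_inter_iff, and_comm]
      rw [this]
      exact hcont.preimage_isClosed_of_isClosed isClosed_Icc isClosed_singleton
    set t' : ℝ := sSup A with ht'
    have ht'A : t' ∈ A := hAclosed.csSup_mem hAne hAbdd
    have ht'lt : t' < ss i := by
      rcases eq_or_lt_of_le ht'A.1.2 with h | h
      · exfalso
        have : v₀ = v₁ := by rw [← ht'A.2, h, hs i]
        linarith
      · exact h
    -- s' = first time V∘r = v₁ in [t', ss i]
    set B : Set ℝ := {u ∈ Set.Icc t' (ss i) | V (r u) = v₁} with hB
    have hBne : B.Nonempty := ⟨ss i, ⟨⟨le_of_lt ht'lt, le_refl _⟩, hs i⟩⟩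
    have hBbdd : BddBelow B := ⟨t', fun u hu => hu.1.1⟩
    have hcont' : ContinuousOn (fun u => V (r u)) (Set.Icc t' (ss i)) :=
      hcont.mono (Set.Icc_subset_Icc_left ht'A.1.1)
    have hBclosed : IsClosed B := by
      have : B = Set.Icc t' (ss i) ∩ (fun u => V (r u)) ⁻¹' {v₁} := by
        ext u; simp [hB, Set.mem_inter_iff, and_comm]
      rw [this]
      exact hcont'.preimage_isClosed_of_isClosed isClosed_Icc isClosed_singleton
    set s' : ℝ := sInf B with hs'
    have hs'B : s' ∈ B := hBclosed.csInf_mem hBne hBbdd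
    have ht's' : t' ≤ s' := hs'B.1.1
    -- on [t', s'], V (r u) ≥ v₀
    have hVlb : ∀ u ∈ Set.Icc t' s', v₀ ≤ V (r u) := by
      intro u hu
      by_contra hlt
      push_neg at hlt
      -- IVT on [u, ss i]: V(r u) < v₀ < v₁ = V(r (ss i))
      have husub : Set.Icc u (ss i) ⊆ Set.Icc (ts i) (ss i) :=
        Set.Icc_subset_Icc (le_trans ht'A.1.1 hu.1) (le_refl _)
      have hivt := intermediate_value_Icc (le_trans hu.2 hs'B.1.2) (hcont.mono husub)
      have : v₀ ∈ Set.Icc (V (r u)) (V (r (ss i))) := by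
        constructor
        · exact le_of_lt hlt
        · rw [hs i]; exact le_of_lt hv
      obtain ⟨w, hw, hwv⟩ := hivt this
      have hwA : w ∈ A := ⟨husub hw, hwv⟩
      have : w ≤ t' := le_csSup hAbdd hwA
      have hut' : t' < u := by
        rcases eq_or_lt_of_le hu.1 with h | h
        · exfalso; rw [← h] at hlt; rw [ht'A.2] at hlt; exact lt_irrefl _ hlt
        · exact h
      linarith [hw.1]
    -- on [t', s'], speed ≤ M
    have hspeed : ∀ u ∈ Set.Icc t' s', ‖r' u‖ ≤ M := by
      intro u hu
      have humem : u ∈ Set.Ioo a b := hIcc ⟨le_trans ht'A.1.1 hu.1, le_trans hu.2 hs'B.1.2⟩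
      have hEu' : V (r u) + ‖r' u‖ ^ 2 / 2 = e := hEe u humem
      have h1 : ‖r' u‖ ^ 2 ≤ 2 * (e - v₀) := by linarith [hVlb u hu]
      rw [hM]
      calc ‖r' u‖ = Real.sqrt (‖r' u‖ ^ 2) := (Real.sqrt_sq (norm_nonneg _)).symm
        _ ≤ Real.sqrt (2 * (e - v₀)) := Real.sqrt_le_sqrt h1
    -- mean value inequality
    have hsub2 : Set.Icc t' s' ⊆ Set.Ioo a b := fun u hu =>
      hIcc ⟨le_trans ht'A.1.1 hu.1, le_trans hu.2 hs'B.1.2⟩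
    have hmv : ‖r s' - r t'‖ ≤ M * ‖s' - t'‖ := by
      refine Convex.norm_image_sub_le_of_norm_hasDerivWithin_le
        (f := r) (f' := r') (s := Set.Icc t' s')
        (fun u hu => (hr u (hsub2 hu)).hasDerivWithinAt) (fun u hu => hspeed u hu)
        (convex_Icc _ _) ⟨le_refl _, ht's'⟩ ⟨ht's', le_refl _⟩
    have hδle : δ ≤ ‖r s' - r t'‖ := by
      have h1 := hsep (r t') (hmem t' (hsub2 ⟨le_refl _, ht's'⟩))
        (r s') (hmem s' (hsub2 ⟨ht's', le_refl _⟩)) ht'A.2 hs'B.2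
      rw [dist_eq_norm] at h1
      calc δ ≤ ‖r t' - r s'‖ := h1
        _ = ‖r s' - r t'‖ := norm_sub_rev _ _
    have h2 : ‖s' - t'‖ = s' - t' := by rw [Real.norm_eq_abs, abs_of_nonneg]; linarith
    have h3 : δ ≤ M * (s' - t') := by rw [← h2]; linarith
    have h4 : s' - t' ≤ ss i - ts i := by
      have := ht'A.1.1; have := hs'B.1.2; linarith
    nlinarith
  -- M > 0
  have hMpos : 0 < M := by
    by_contra hM0
    push_neg at hM0
    have := hkey 0
    have h0 : M = 0 := le_antisymm hM0 hMnonneg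
    rw [h0] at this; linarith
  obtain ⟨c, hc⟩ : ∃ c : ℝ, c = δ / M := ⟨_, rfl⟩
  have hcpos : 0 < c := hc ▸ div_pos hδ hMpos
  have hgap : ∀ i, c ≤ ss i - ts i := fun i =>
    hc ▸ (div_le_iff₀' hMpos).mpr (hkey i)
  have hmono : ∀ i, ts i + c ≤ ts (i + 1) := fun i => by
    have := hgap i; have := (horder i).2; linarith
  have hlin : ∀ i : ℕ, ts 0 + i * c ≤ ts i := by
    intro i
    induction i with
    | zero => simp
    | succ k ih =>
      have := hmono k
      push_cast
      nlinarith
  obtain ⟨m, hm⟩ := exists_nat_gt ((b - ts 0) / c)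
  have h1 : b - ts 0 < m * c := (div_lt_iff₀ hcpos).mp hm
  have h2 := hlin m
  have h3 := (hts m).2
  linarith
end

section
/- Let 𝒞 be the circle of radius ρ in the xy-plane in ℝ³ centered at the origin, with constant positive density λ, and V its gravitational potential. For a sequence rₙ ∈ ℝ³ ∖ 𝒞, V(rₙ) → −∞ if and only if dist(rₙ, 𝒞) → 0. -/
open Real Set Filter

/-- The point of the circle of radius `ρ` in the `xy`-plane at angle `θ`. -/
noncomputable def circlePt (ρ θ : ℝ) : EuclideanSpace ℝ (Fin 3) :=
  (WithLp.equiv 2 (Fin 3 → ℝ)).symm ![ρ * Real.cos θ, ρ * Real.sin θ, 0]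

/-- The circle of radius `ρ` in the `xy`-plane centered at the origin. -/
def circleSet (ρ : ℝ) : Set (EuclideanSpace ℝ (Fin 3)) := Set.range (circlePt ρ)

/-- The gravitational potential of the homogeneous circle of radius `ρ` and density `lam`. -/
noncomputable def circlePotential (lam ρ : ℝ) (r : EuclideanSpace ℝ (Fin 3)) : ℝ :=
  -∫ θ in (0:ℝ)..(2 * π), lam * ρ / dist r (circlePt ρ θ)

lemma circlePt_continuous (ρ : ℝ) : Continuous (circlePt ρ) := by
  apply Continuous.comp (PiLp.continuous_toLp 2 (fun _ : Fin 3 => ℝ))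
  refine continuous_pi fun i => ?_
  fin_cases i <;> simp <;> fun_prop

lemma circlePt_periodic (ρ : ℝ) : Function.Periodic (circlePt ρ) (2 * π) := by
  intro θ
  unfold circlePt
  simp [Real.cos_add_two_pi, Real.sin_add_two_pi]

lemma circlePt_dist_le (ρ : ℝ) (hρ : 0 ≤ ρ) (a b : ℝ) :
    dist (circlePt ρ a) (circlePt ρ b) ≤ ρ * |a - b| := by
  have key : (ρ * cos a - ρ * cos b) ^ 2 + (ρ * sin a - ρ * sin b) ^ 2 ≤ (ρ * |a - b|) ^ 2 := by
    have hs : sin ((a - b) / 2) ^ 2 ≤ ((a - b) / 2) ^ 2 := Real.sin_sq_le_sq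
    have h2 : sin ((a - b) / 2) ^ 2 = 1 / 2 - cos (2 * ((a - b) / 2)) / 2 :=
      Real.sin_sq_eq_half_sub _
    have he : 2 * ((a - b) / 2) = a - b := by ring
    rw [he] at h2
    have h3 : cos (a - b) = cos a * cos b + sin a * sin b := Real.cos_sub a b
    have h4 : sin a ^ 2 + cos a ^ 2 = 1 := Real.sin_sq_add_cos_sq a
    have h5 : sin b ^ 2 + cos b ^ 2 = 1 := Real.sin_sq_add_cos_sq b
    have habs : |a - b| ^ 2 = (a - b) ^ 2 := sq_abs _
    nlinarith [sq_nonneg ρ, sq_nonneg (a - b)]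
  have hd : dist (circlePt ρ a) (circlePt ρ b) =
      Real.sqrt ((ρ * cos a - ρ * cos b) ^ 2 + (ρ * sin a - ρ * sin b) ^ 2) := by
    rw [EuclideanSpace.dist_eq, Fin.sum_univ_three]
    simp [circlePt, Real.dist_eq, sq_abs]
  rw [hd]
  have hnn : (0:ℝ) ≤ ρ * |a - b| := mul_nonneg hρ (abs_nonneg _)
  calc Real.sqrt _ ≤ Real.sqrt ((ρ * |a - b|) ^ 2) := Real.sqrt_le_sqrt key
    _ = ρ * |a - b| := Real.sqrt_sq hnn

lemma circleSet_eq_image (ρ : ℝ) : circleSet ρ = circlePt ρ '' Set.Icc 0 (2 * π) := by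
  apply Set.Subset.antisymm
  · rintro x ⟨θ, rfl⟩
    obtain ⟨y, hy, hxy⟩ := (circlePt_periodic ρ).exists_mem_Ico₀ Real.two_pi_pos θ
    exact ⟨y, ⟨hy.1, hy.2.le⟩, hxy.symm⟩
  · rintro x ⟨θ, _, rfl⟩
    exact ⟨θ, rfl⟩

lemma circleSet_isCompact (ρ : ℝ) : IsCompact (circleSet ρ) := by
  rw [circleSet_eq_image]
  exact isCompact_Icc.image (circlePt_continuous ρ)

lemma circle_infDist_pos (ρ : ℝ) (r : EuclideanSpace ℝ (Fin 3)) (hr : r ∉ circleSet ρ) :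
    0 < Metric.infDist r (circleSet ρ) := by
  rw [← (circleSet_isCompact ρ).isClosed.notMem_iff_infDist_pos ⟨_, Set.mem_range_self 0⟩]
  exact hr

lemma dist_circlePt_pos (lam ρ : ℝ) (r : EuclideanSpace ℝ (Fin 3)) (hr : r ∉ circleSet ρ)
    (θ : ℝ) : 0 < dist r (circlePt ρ θ) :=
  dist_pos.mpr fun h => hr (h ▸ ⟨θ, rfl⟩)

lemma integrand_continuous (lam ρ : ℝ) (r : EuclideanSpace ℝ (Fin 3)) (hr : r ∉ circleSet ρ) :
    Continuous (fun θ => lam * ρ / dist r (circlePt ρ θ)) :=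
  continuous_const.div (continuous_const.dist (circlePt_continuous ρ))
    (fun θ => ne_of_gt (dist_circlePt_pos lam ρ r hr θ))

lemma neg_potential_le (lam ρ : ℝ) (r : EuclideanSpace ℝ (Fin 3)) (hlam : 0 < lam) (hρ : 0 < ρ)
    (hr : r ∉ circleSet ρ) :
    -circlePotential lam ρ r ≤ 2 * π * lam * ρ / Metric.infDist r (circleSet ρ) := by
  set d := Metric.infDist r (circleSet ρ) with hd
  have hdpos : 0 < d := circle_infDist_pos ρ r hr
  rw [circlePotential, neg_neg]
  have hmono : ∫ θ in (0:ℝ)..(2 * π), lam * ρ / dist r (circlePt ρ θ) ≤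
      ∫ _ in (0:ℝ)..(2 * π), lam * ρ / d := by
    apply intervalIntegral.integral_mono_on Real.two_pi_pos.le
      ((integrand_continuous lam ρ r hr).intervalIntegrable _ _)
      (intervalIntegrable_const)
    intro θ _
    exact div_le_div_of_nonneg_left (by positivity) hdpos
      (Metric.infDist_le_dist_of_mem ⟨θ, rfl⟩)
  calc _ ≤ _ := hmono
    _ = 2 * π * lam * ρ / d := by
        rw [intervalIntegral.integral_const]
        simp [smul_eq_mul]
        ring

lemma le_neg_potential (lam ρ : ℝ) (r : EuclideanSpace ℝ (Fin 3)) (hlam : 0 < lam) (hρ : 0 < ρ)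
    (hr : r ∉ circleSet ρ) :
    lam * Real.log (2 * Metric.infDist r (circleSet ρ) + ρ) -
      lam * Real.log (2 * Metric.infDist r (circleSet ρ)) ≤ -circlePotential lam ρ r := by
  set d := Metric.infDist r (circleSet ρ) with hd
  have hdpos : 0 < d := circle_infDist_pos ρ r hr
  set f := fun θ => lam * ρ / dist r (circlePt ρ θ) with hf
  have hfc : Continuous f := integrand_continuous lam ρ r hr
  have hfnn : ∀ θ, 0 ≤ f θ := fun θ => by
    have := dist_circlePt_pos lam ρ r hr θ
    positivity
  obtain ⟨y, ⟨θ₀, rfl⟩, hy⟩ : ∃ y ∈ circleSet ρ, dist r y < 2 * d := by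
    apply (Metric.infDist_lt_iff ⟨_, Set.mem_range_self 0⟩).mp
    show d < 2 * d
    linarith
  rw [circlePotential, neg_neg]
  have hper : Function.Periodic f (2 * π) := fun θ => by
    simp only [hf, circlePt_periodic ρ θ]
  have h1 : ∫ θ in (0:ℝ)..(2 * π), f θ = ∫ θ in θ₀..(θ₀ + 2 * π), f θ := by
    have := hper.intervalIntegral_add_eq θ₀ 0
    rw [zero_add] at this
    exact this.symm
  have hint : ∀ a b : ℝ, IntervalIntegrable f MeasureTheory.volume a b :=
    fun a b => hfc.intervalIntegrable a b
  have h2 : ∫ θ in θ₀..(θ₀ + 1), f θ ≤ ∫ θ in θ₀..(θ₀ + 2 * π), f θ := by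
    rw [← intervalIntegral.integral_add_adjacent_intervals (hint θ₀ (θ₀ + 1))
      (hint (θ₀ + 1) (θ₀ + 2 * π))]
    have : 0 ≤ ∫ θ in (θ₀ + 1)..(θ₀ + 2 * π), f θ :=
      intervalIntegral.integral_nonneg (by nlinarith [Real.pi_gt_three]) (fun θ _ => hfnn θ)
    linarith
  set g := fun θ => lam * ρ / (2 * d + ρ * (θ - θ₀)) with hg
  have hden : ∀ θ ∈ Set.Icc θ₀ (θ₀ + 1), 0 < 2 * d + ρ * (θ - θ₀) := by
    intro θ hθ
    nlinarith [hθ.1]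
  have hgint : IntervalIntegrable g MeasureTheory.volume θ₀ (θ₀ + 1) := by
    apply ContinuousOn.intervalIntegrable
    rw [Set.uIcc_of_le (by linarith)]
    exact continuousOn_const.div (by fun_prop) (fun θ hθ => ne_of_gt (hden θ hθ))
  have h3 : ∫ θ in θ₀..(θ₀ + 1), g θ ≤ ∫ θ in θ₀..(θ₀ + 1), f θ := by
    apply intervalIntegral.integral_mono_on (by linarith) hgint (hint _ _)
    intro θ hθ
    have hd1 : dist r (circlePt ρ θ) ≤ dist r (circlePt ρ θ₀) + ρ * |θ₀ - θ| :=
      (dist_triangle r (circlePt ρ θ₀) (circlePt ρ θ)).trans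
        (by linarith [circlePt_dist_le ρ hρ.le θ₀ θ])
    have habs : |θ₀ - θ| = θ - θ₀ := by
      rw [abs_sub_comm, abs_of_nonneg (by linarith [hθ.1])]
    have hlt : dist r (circlePt ρ θ) < 2 * d + ρ * (θ - θ₀) := by
      rw [habs] at hd1; linarith
    exact div_le_div_of_nonneg_left (by positivity)
      (dist_circlePt_pos lam ρ r hr θ) hlt.le
  have h4 : ∫ θ in θ₀..(θ₀ + 1), g θ =
      lam * Real.log (2 * d + ρ) - lam * Real.log (2 * d) := by
    have hderiv : ∀ θ ∈ Set.uIcc θ₀ (θ₀ + 1),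
        HasDerivAt (fun θ => lam * Real.log (2 * d + ρ * (θ - θ₀))) (g θ) θ := by
      intro θ hθ
      rw [Set.uIcc_of_le (by linarith)] at hθ
      have hpos := hden θ hθ
      have hu : HasDerivAt (fun θ => 2 * d + ρ * (θ - θ₀)) ρ θ := by
        simpa using (((hasDerivAt_id θ).sub_const θ₀).const_mul ρ).const_add (2 * d)
      have := ((Real.hasDerivAt_log (ne_of_gt hpos)).comp θ hu).const_mul lam
      refine this.congr_deriv ?_
      rw [hg]
      field_simp
    rw [intervalIntegral.integral_eq_sub_of_hasDerivAt hderiv hgint]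
    norm_num
  linarith

theorem potential_tendsto_atBot_iff (lam ρ : ℝ) (hlam : 0 < lam) (hρ : 0 < ρ)
    (rs : ℕ → EuclideanSpace ℝ (Fin 3)) (hrs : ∀ n, rs n ∉ circleSet ρ) :
    Tendsto (fun n => circlePotential lam ρ (rs n)) atTop atBot ↔
      Tendsto (fun n => Metric.infDist (rs n) (circleSet ρ)) atTop (nhds 0) := by
  set d := fun n => Metric.infDist (rs n) (circleSet ρ) with hdd
  have hdpos : ∀ n, 0 < d n := fun n => circle_infDist_pos ρ (rs n) (hrs n)
  constructor
  · intro hV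
    have h1 : Tendsto (fun n => -circlePotential lam ρ (rs n)) atTop atTop :=
      tendsto_neg_atBot_atTop.comp hV
    have hupper : Tendsto (fun n => 2 * π * lam * ρ / (-circlePotential lam ρ (rs n)))
        atTop (nhds 0) := tendsto_const_nhds.div_atTop h1
    apply tendsto_of_tendsto_of_tendsto_of_le_of_le' tendsto_const_nhds hupper
    · exact Eventually.of_forall fun n => (hdpos n).le
    · filter_upwards [h1.eventually_gt_atTop 0] with n hVn
      have hle := neg_potential_le lam ρ (rs n) hlam hρ (hrs n)
      rw [le_div_iff₀ (hdpos n)] at hle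
      rw [le_div_iff₀ hVn]
      linarith [mul_comm (d n) (-circlePotential lam ρ (rs n))]
  · intro hd0
    have h2d : Tendsto (fun n => 2 * d n) atTop (nhdsWithin (0:ℝ) {0}ᶜ) := by
      rw [tendsto_nhdsWithin_iff]
      constructor
      · simpa using hd0.const_mul 2
      · exact Eventually.of_forall fun n => by
          simp [ne_of_gt (hdpos n)]
    have hlog : Tendsto (fun n => Real.log (2 * d n)) atTop atBot :=
      Real.tendsto_log_nhdsNE_zero.comp h2d
    have hfirst : Tendsto (fun n => lam * Real.log (2 * d n)) atTop atBot :=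
      (tendsto_const_mul_atBot_of_pos hlam).mpr hlog
    have hsecond : Tendsto (fun n => -(lam * Real.log (2 * d n + ρ))) atTop
        (nhds (-(lam * Real.log ρ))) := by
      apply Tendsto.neg
      apply Tendsto.const_mul
      have hρ0 : Tendsto (fun n => 2 * d n + ρ) atTop (nhds ρ) := by
        have := (hd0.const_mul 2).add_const ρ
        simpa using this
      exact ((Real.continuousAt_log (ne_of_gt hρ)).tendsto.comp hρ0)
    have hB : Tendsto (fun n => -(lam * Real.log (2 * d n + ρ)) + lam * Real.log (2 * d n))
        atTop atBot := hsecond.add_atBot hfirst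
    apply tendsto_atBot_mono _ hB
    intro n
    have := le_neg_potential lam ρ (rs n) hlam hρ (hrs n)
    simp only [neg_add_eq_sub]
    linarith
end
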